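/- For any real θ and natural numbers n, k with 2n+1 ≤ k < 4n+2, the average (1/(2n+1)) ∑_{ℓ=0}^{2n} (cos((θ+2πℓ)/(2n+1)))^{2k} equals (1/4^k)·[C(2k,k) + 2·C(2k,k−2n−1)·cos(2θ)]. -/

import Mathlib

open Real Finset

lemma cos_pow (m : ℕ) (z : ℂ) :
    (Complex.cos z) ^ m = (1 / 2 ^ m) * ∑ j ∈ Finset.range (m + 1),
      (Nat.choose m j : ℂ) * Complex.exp ((2 * j - m : ℤ) * z * Complex.I) := by
  have h : Complex.cos z = (Complex.exp (z * Complex.I) + Complex.exp (-z * Complex.I)) / 2 := by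
    rw [Complex.cos]
  rw [h, div_pow, add_pow, Finset.sum_div, Finset.mul_sum]
  refine Finset.sum_congr rfl fun j hj => ?_
  rw [Finset.mem_range, Nat.lt_succ_iff] at hj
  rw [← Complex.exp_nat_mul, ← Complex.exp_nat_mul, ← Complex.exp_add]
  rw [one_div, inv_mul_eq_div, eq_div_iff (pow_ne_zero _ two_ne_zero),
    div_mul_eq_mul_div, mul_div_assoc, div_self (pow_ne_zero _ two_ne_zero), mul_one,
    mul_comm]
  congr 2
  push_cast [hj]
  ring

lemma geom_exp (N : ℕ) (hN : 0 < N) (m : ℤ) :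
    ∑ ℓ ∈ Finset.range N, Complex.exp (2 * Real.pi * Complex.I * m * ℓ / N)
      = if (N : ℤ) ∣ m then (N : ℂ) else 0 := by
  have hNc : (N : ℂ) ≠ 0 := Nat.cast_ne_zero.mpr hN.ne'
  have hπ : (Real.pi : ℂ) ≠ 0 := by exact_mod_cast Real.pi_ne_zero
  set w : ℂ := Complex.exp (2 * Real.pi * Complex.I * m / N) with hw
  have hpow : ∀ ℓ : ℕ, Complex.exp (2 * Real.pi * Complex.I * m * ℓ / N) = w ^ ℓ := by
    intro ℓ
    rw [hw, ← Complex.exp_nat_mul]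
    congr 1
    ring
  simp only [hpow]
  have hwN : w ^ N = 1 := by
    rw [hw, ← Complex.exp_nat_mul]
    have : (N : ℂ) * (2 * Real.pi * Complex.I * m / N) = m * (2 * Real.pi * Complex.I) := by
      field_simp
    rw [this, Complex.exp_int_mul_two_pi_mul_I]
  have hw1 : w = 1 ↔ (N : ℤ) ∣ m := by
    rw [hw, Complex.exp_eq_one_iff]
    constructor
    · rintro ⟨t, ht⟩
      refine ⟨t, ?_⟩
      field_simp at ht
      have : (m : ℂ) = N * t := by
        have h2 : (2 : ℂ) * Real.pi * Complex.I ≠ 0 := by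
          simp [hπ, Complex.I_ne_zero]
        apply mul_left_cancel₀ h2
        linear_combination (2 * (Real.pi : ℂ) * Complex.I) * ht
      exact_mod_cast this
    · rintro ⟨t, ht⟩
      refine ⟨t, ?_⟩
      rw [ht]
      push_cast
      field_simp
  by_cases hdvd : (N : ℤ) ∣ m
  · rw [if_pos hdvd]
    have : w = 1 := hw1.mpr hdvd
    simp [this]
  · rw [if_neg hdvd]
    have hwne : w ≠ 1 := fun h => hdvd (hw1.mp h)
    rw [geom_sum_eq hwne, hwN]
    simp

lemma filter_eq (n k : ℕ) (h1 : 2 * n + 1 ≤ k) (h2 : k < 4 * n + 2) :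
    (Finset.range (2 * k + 1)).filter
        (fun j : ℕ => ((2 * n + 1 : ℕ) : ℤ) ∣ (2 * (j : ℤ) - 2 * (k : ℤ)))
      = ({k - (2 * n + 1), k, k + (2 * n + 1)} : Finset ℕ) := by
  have hNpos : (0 : ℤ) < 2 * (n : ℤ) + 1 := by positivity
  ext j
  simp only [Finset.mem_filter, Finset.mem_range, Finset.mem_insert, Finset.mem_singleton]
  constructor
  · rintro ⟨hjr, t, ht⟩
    have hNodd : ¬ Even ((2 * n + 1 : ℕ) : ℤ) := by
      push_cast
      simp [Int.even_iff]
    have heven : Even (((2 * n + 1 : ℕ) : ℤ) * t) := ⟨(j : ℤ) - k, by omega⟩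
    have ht2 : Even t := (Int.even_mul.mp heven).resolve_left hNodd
    obtain ⟨s, hs⟩ := ht2
    have hd : (j : ℤ) - k = (2 * (n : ℤ) + 1) * s := by
      subst hs; push_cast at ht
      have hd2 : 2 * ((j : ℤ) - k) = 2 * ((2 * (n : ℤ) + 1) * s) := by linear_combination ht
      exact mul_left_cancel₀ two_ne_zero hd2
    have hlb : (2 * (n : ℤ) + 1) * (-2) < (2 * (n : ℤ) + 1) * s := by
      rw [← hd]; omega
    have hub : (2 * (n : ℤ) + 1) * s < (2 * (n : ℤ) + 1) * 2 := by
      rw [← hd]; omega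
    have hs1 : -2 < s := (mul_lt_mul_iff_right₀ hNpos).mp hlb
    have hs2 : s < 2 := (mul_lt_mul_iff_right₀ hNpos).mp hub
    interval_cases s <;> omega
  · intro hj
    rcases hj with h | h | h
    · subst h
      refine ⟨by omega, -2, ?_⟩
      push_cast; omega
    · subst h
      exact ⟨by omega, 0, by ring⟩
    · subst h
      refine ⟨by omega, 2, ?_⟩
      push_cast; ring

theorem stmt_11 (θ : ℝ) (n k : ℕ) (h1 : 2 * n + 1 ≤ k) (h2 : k < 4 * n + 2) :
    (1 / (2 * n + 1 : ℝ)) * ∑ ℓ ∈ Finset.range (2 * n + 1),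
        (Real.cos ((θ + 2 * Real.pi * ℓ) / (2 * n + 1))) ^ (2 * k)
      = (1 / 4 ^ k) * ((Nat.choose (2 * k) k : ℝ)
          + 2 * (Nat.choose (2 * k) (k - (2 * n + 1)) : ℝ) * Real.cos (2 * θ)) := by
  have hN : 0 < 2 * n + 1 := by omega
  have hNc : ((2 * n + 1 : ℕ) : ℂ) ≠ 0 := Nat.cast_ne_zero.mpr hN.ne'
  have hNc' : (2 * (n : ℂ) + 1) ≠ 0 := by push_cast at hNc; exact hNc
  rw [← Complex.ofReal_inj]
  push_cast
  -- abbreviations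
  set N := 2 * n + 1 with hNdef
  -- Step 1: expand each cosine power and factor
  have step1 : ∀ ℓ ∈ Finset.range N,
      Complex.cos ((↑θ + 2 * ↑π * ↑ℓ) / (2 * ↑n + 1)) ^ (2 * k)
        = (1 / 2 ^ (2 * k)) * ∑ j ∈ Finset.range (2 * k + 1),
            ((Nat.choose (2 * k) j : ℂ) * Complex.exp ((2 * (j:ℤ) - 2 * (k:ℤ)) * θ * Complex.I / N))
              * Complex.exp (2 * Real.pi * Complex.I * ((2 * (j:ℤ) - 2 * (k:ℤ)) : ℤ) * ℓ / N) := by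
    intro ℓ hℓ
    rw [cos_pow (2 * k)]
    congr 1
    refine Finset.sum_congr rfl fun j hj => ?_
    conv_rhs => rw [mul_assoc, ← Complex.exp_add]
    congr 2
    push_cast [hNdef]
    field_simp
  rw [Finset.sum_congr rfl step1, ← Finset.mul_sum, Finset.sum_comm]
  -- Step 2: evaluate inner geometric sums
  have step2 : ∀ j ∈ Finset.range (2 * k + 1),
      ∑ ℓ ∈ Finset.range N,
        ((Nat.choose (2 * k) j : ℂ) * Complex.exp ((2 * (j:ℤ) - 2 * (k:ℤ)) * θ * Complex.I / N))
          * Complex.exp (2 * Real.pi * Complex.I * ((2 * (j:ℤ) - 2 * (k:ℤ)) : ℤ) * ℓ / N)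
      = if ((N : ℕ) : ℤ) ∣ (2 * (j:ℤ) - 2 * (k:ℤ)) then
          ((Nat.choose (2 * k) j : ℂ) * Complex.exp ((2 * (j:ℤ) - 2 * (k:ℤ)) * θ * Complex.I / N)) * N
        else 0 := by
    intro j hj
    rw [← Finset.mul_sum, geom_exp N hN (2 * (j:ℤ) - 2 * (k:ℤ)), mul_ite, mul_zero]
  rw [Finset.sum_congr rfl step2, ← Finset.sum_filter, filter_eq n k h1 h2]
  -- Step 3: evaluate the 3-element sum
  have hne1 : k - N ∉ ({k, k + N} : Finset ℕ) := by
    simp only [Finset.mem_insert, Finset.mem_singleton]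
    omega
  have hne2 : k ∉ ({k + N} : Finset ℕ) := by simp
  rw [Finset.sum_insert hne1, Finset.sum_insert hne2, Finset.sum_singleton]
  -- exponent simplifications
  have e1 : (2 * ((k - N : ℕ):ℤ) - 2 * (k:ℤ)) * θ * Complex.I / N = -(2 * θ * Complex.I) := by
    have : ((k - N : ℕ) : ℤ) = (k : ℤ) - N := by push_cast [hNdef]; omega
    rw [this]
    push_cast
    field_simp
    ring
  have e2 : (2 * (k:ℤ) - 2 * (k:ℤ)) * θ * Complex.I / N = 0 := by
    push_cast
    ring_nf

  have e3 : (2 * ((k + N : ℕ):ℤ) - 2 * (k:ℤ)) * θ * Complex.I / N = 2 * θ * Complex.I := by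
    push_cast
    field_simp
    ring
  rw [e1, e2, e3, Complex.exp_zero]
  have hchoose : Nat.choose (2 * k) (k + N) = Nat.choose (2 * k) (k - N) := by
    rw [← Nat.choose_symm (by omega : k + N ≤ 2 * k)]
    congr 1
    omega
  rw [hchoose]
  have hcos : Complex.cos (2 * (θ:ℂ)) =
      (Complex.exp (2 * θ * Complex.I) + Complex.exp (-(2 * θ * Complex.I))) / 2 := by
    rw [Complex.cos]
    ring_nf
  rw [hcos]
  have h4 : (4 : ℂ) ^ k = 2 ^ (2 * k) := by
    rw [pow_mul]; norm_num
  rw [h4]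
  have h2k : (2 : ℂ) ^ (2 * k) ≠ 0 := pow_ne_zero _ two_ne_zero
  push_cast
  field_simp
  rw [hNdef]; push_cast; ring
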